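/- For every real t with 0 < t < 1 − √3/2, one has ∫_t^{√3/2} ((x/(x² + t − t²))² − 1)^{−1/2} dx > 1/2. (Geometrically: the undulary with unit-period generating ellipse whose neck height is t, i.e. the solution of dx₁/dx₃ = √((x₁/(x₁² + t − t²))² − 1) with x₁(0) = t, satisfies x₁ < √3/2 at x₃ = 1/2.) -/

import Mathlib

open MeasureTheory Set

set_option maxHeartbeats 4000000 in
/-- The undulary with neck height `t`, solving `dx₁/dx₃ = √((x₁/(x₁²+t−t²))²−1)`,
`x₁(0) = t`, satisfies `x₁ < √3/2` at `x₃ = 1/2`: the inverse function's value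
`x₃` at `x₁ = √3/2`, given by the integral, exceeds `1/2`. -/
theorem undulary_integral_gt_half (t : ℝ) (h0 : 0 < t)
    (h1 : t < 1 - Real.sqrt 3 / 2) :
    1 / 2 < ∫ x in t..(Real.sqrt 3 / 2),
      1 / Real.sqrt ((x / (x ^ 2 + t - t ^ 2)) ^ 2 - 1) := by
  set b : ℝ := Real.sqrt 3 / 2 with hbdef
  have hs3 : Real.sqrt 3 ^ 2 = 3 := Real.sq_sqrt (by norm_num)
  have hs3lb : 1.732 < Real.sqrt 3 := by nlinarith [Real.sqrt_nonneg 3]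
  have hs3ub : Real.sqrt 3 < 1.7321 := by nlinarith [Real.sqrt_nonneg 3]
  have hb2 : b ^ 2 = 3 / 4 := by rw [hbdef]; nlinarith [hs3]
  have hblb : (0.866 : ℝ) < b := by rw [hbdef]; linarith
  have hbub : b < 0.87 := by rw [hbdef]; linarith
  have htub : t < 1 - b := h1
  have ht14 : t < 0.134 := by linarith
  have htb : t < b := by linarith
  have ha : 0 < t - t ^ 2 := by nlinarith
  -- continuity of the lower-bound function `g` on [t, b]
  have hgcont : ContinuousOn
      (fun x => x / Real.sqrt (1 - x ^ 2) + (t - t ^ 2) / x) (Icc t b) := by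
    apply ContinuousOn.add
    · apply ContinuousOn.div continuousOn_id
      · exact (Real.continuous_sqrt.comp (continuous_const.sub (continuous_pow 2))).continuousOn
      · intro x hx
        have hx1 : x < 1 := lt_of_le_of_lt hx.2 (by linarith)
        have hx0 : 0 < x := lt_of_lt_of_le h0 hx.1
        have : 0 < 1 - x ^ 2 := by nlinarith
        positivity
    · exact continuousOn_const.div continuousOn_id
        (fun x hx => ne_of_gt (lt_of_lt_of_le h0 hx.1))
  have hg_int : IntervalIntegrable
      (fun x => x / Real.sqrt (1 - x ^ 2) + (t - t ^ 2) / x) volume t b :=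
    hgcont.intervalIntegrable_of_Icc htb.le
  -- pointwise bound g ≤ f on Ioc t b
  have hptwise : ∀ x ∈ Ioc t b,
      x / Real.sqrt (1 - x ^ 2) + (t - t ^ 2) / x
        ≤ 1 / Real.sqrt ((x / (x ^ 2 + t - t ^ 2)) ^ 2 - 1) := by
    intro x hx
    obtain ⟨hxt, hxb⟩ := hx
    have hx0 : 0 < x := h0.trans hxt
    have hx1 : x < 1 := by linarith
    have h1x : 0 < 1 - x ^ 2 := by nlinarith
    set s : ℝ := Real.sqrt (1 - x ^ 2) with hsdef
    have hs0 : 0 < s := Real.sqrt_pos.2 h1x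
    have hs1 : s ≤ 1 := Real.sqrt_le_one.2 (by nlinarith)
    have hsq : s ^ 2 = 1 - x ^ 2 := Real.sq_sqrt h1x.le
    set D : ℝ := x ^ 2 + t - t ^ 2 with hDdef
    have hD0 : 0 < D := by nlinarith [sq_nonneg x]
    have hDx : D < x := by
      nlinarith [mul_pos (sub_pos.2 hxt) (show (0:ℝ) < 1 - t - x by linarith)]
    have hu0 : 0 < (x / D) ^ 2 - 1 := by
      have h1 : 1 < x / D := (one_lt_div hD0).2 hDx
      nlinarith
    have hle : (x / D) ^ 2 - 1 ≤ (x * s / D) ^ 2 := by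
      have h2 : (x * s / D) ^ 2 = x ^ 2 * (1 - x ^ 2) / D ^ 2 := by
        rw [div_pow, mul_pow, hsq]
      have hkey : x ^ 2 - D ^ 2 ≤ x ^ 2 * (1 - x ^ 2) := by nlinarith [sq_nonneg x]
      have hD2 : (0:ℝ) < D ^ 2 := pow_pos hD0 2
      rw [h2, div_pow, show x ^ 2 / D ^ 2 - 1 = (x ^ 2 - D ^ 2) / D ^ 2 by field_simp]
      gcongr
    have hw0 : 0 ≤ x * s / D := by positivity
    have hsqrtle : Real.sqrt ((x / D) ^ 2 - 1) ≤ x * s / D := by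
      calc Real.sqrt ((x / D) ^ 2 - 1) ≤ Real.sqrt ((x * s / D) ^ 2) := Real.sqrt_le_sqrt hle
        _ = x * s / D := Real.sqrt_sq hw0
    have hstep : 1 / (x * s / D) ≤ 1 / Real.sqrt ((x / D) ^ 2 - 1) :=
      one_div_le_one_div_of_le (Real.sqrt_pos.2 hu0) hsqrtle
    have hg_le : x / s + (t - t ^ 2) / x ≤ 1 / (x * s / D) := by
      have hdiff : 1 / (x * s / D) - (x / s + (t - t ^ 2) / x)
          = (t - t ^ 2) * (1 - s) / (x * s) := by
        rw [one_div_div, hDdef]; field_simp; ring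
      have hnn : 0 ≤ (t - t ^ 2) * (1 - s) / (x * s) :=
        div_nonneg (mul_nonneg ha.le (by linarith)) (by positivity)
      linarith
    exact hg_le.trans hstep
  -- integrability of the integrand
  have hf_int : IntervalIntegrable
      (fun x => 1 / Real.sqrt ((x / (x ^ 2 + t - t ^ 2)) ^ 2 - 1)) volume t b := by
    have hc : (0:ℝ) < (1 - t - b) * t := mul_pos (by linarith) h0
    set c : ℝ := (1 - t - b) * t with hcdef
    set C : ℝ := 1 / Real.sqrt c with hCdef
    have hC0 : 0 < Real.sqrt c := Real.sqrt_pos.2 hc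
    have hmaj : IntervalIntegrable (fun x => C * (x - t) ^ (-(1/2) : ℝ)) volume t b := by
      have h1 : IntervalIntegrable (fun x : ℝ => x ^ (-(1/2) : ℝ)) volume 0 (b - t) :=
        intervalIntegral.intervalIntegrable_rpow' (by norm_num)
      have h2 := (h1.comp_sub_right t).const_mul C
      simpa using h2
    have hmeas : AEStronglyMeasurable
        (fun x => 1 / Real.sqrt ((x / (x ^ 2 + t - t ^ 2)) ^ 2 - 1))
        (volume.restrict (Ioc t b)) := by
      have hcont : Continuous fun x : ℝ => Real.sqrt ((x / (x ^ 2 + t - t ^ 2)) ^ 2 - 1) := by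
        apply Real.continuous_sqrt.comp
        apply Continuous.sub _ continuous_const
        apply Continuous.pow
        exact continuous_id.div
          (((continuous_pow 2).add continuous_const).sub continuous_const)
          (fun x => by nlinarith [sq_nonneg x])
      exact (measurable_const.div hcont.measurable).aestronglyMeasurable
    rw [intervalIntegrable_iff_integrableOn_Ioc_of_le htb.le]
    apply Integrable.mono' (hmaj.1)
    · exact hmeas
    · rw [ae_restrict_iff' measurableSet_Ioc]
      apply Filter.Eventually.of_forall
      intro x hx
      obtain ⟨hxt, hxb⟩ := hx
      have hx0 : 0 < x := h0.trans hxt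
      set D : ℝ := x ^ 2 + t - t ^ 2 with hDdef
      have hD0 : 0 < D := by nlinarith [sq_nonneg x]
      have hD1 : D ≤ 1 := by nlinarith
      have hxD : D < x := by
        nlinarith [mul_pos (sub_pos.2 hxt) (show (0:ℝ) < 1 - t - x by linarith)]
      have hu0 : 0 < (x / D) ^ 2 - 1 := by
        have h1 : 1 < x / D := (one_lt_div hD0).2 hxD
        nlinarith
      have hlow : c * (x - t) ≤ (x / D) ^ 2 - 1 := by
        have hxmD : (x - t) * (1 - t - x) = x - D := by rw [hDdef]; ring
        have h2 : (x / D) ^ 2 - 1 = (x - D) * (x + D) / D ^ 2 := by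
          field_simp; ring
        have hprod : c ≤ (1 - t - x) * (x + D) := by
          rw [hcdef]
          exact mul_le_mul (by linarith) (by linarith) h0.le (by linarith)
        have hD2le : D ^ 2 ≤ 1 := by nlinarith
        rw [h2, ← hxmD, le_div_iff₀ (by positivity)]
        nlinarith [mul_le_mul_of_nonneg_right hprod (sub_pos.2 hxt).le,
          mul_nonneg (mul_nonneg hc.le (sub_pos.2 hxt).le) (sub_nonneg.2 hD2le)]
      have hsple : Real.sqrt c * Real.sqrt (x - t) ≤ Real.sqrt ((x / D) ^ 2 - 1) := by
        rw [← Real.sqrt_mul hc.le]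
        exact Real.sqrt_le_sqrt hlow
      have hpos : 0 < Real.sqrt c * Real.sqrt (x - t) :=
        mul_pos hC0 (Real.sqrt_pos.2 (by linarith))
      rw [Real.norm_eq_abs, abs_of_nonneg (by positivity)]
      calc 1 / Real.sqrt ((x / D) ^ 2 - 1)
          ≤ 1 / (Real.sqrt c * Real.sqrt (x - t)) := one_div_le_one_div_of_le hpos hsple
        _ = C * (x - t) ^ (-(1/2) : ℝ) := by
            rw [hCdef, Real.rpow_neg (by linarith : (0:ℝ) ≤ x - t), ← Real.sqrt_eq_rpow]
            field_simp
  -- comparison of the two integrals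
  have hcomp : (∫ x in t..b, (x / Real.sqrt (1 - x ^ 2) + (t - t ^ 2) / x))
      ≤ ∫ x in t..b, 1 / Real.sqrt ((x / (x ^ 2 + t - t ^ 2)) ^ 2 - 1) := by
    apply intervalIntegral.integral_mono_ae_restrict htb.le hg_int hf_int
    have hne : ∀ᵐ x ∂(volume.restrict (Icc t b)), x ≠ t := by
      refine MeasureTheory.ae_restrict_of_ae ?_
      have : (volume : Measure ℝ) {t} = 0 := measure_singleton t
      exact MeasureTheory.ae_iff.2 (by simpa using this)
    have hmem : ∀ᵐ x ∂(volume.restrict (Icc t b)), x ∈ Icc t b :=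
      MeasureTheory.ae_restrict_mem measurableSet_Icc
    filter_upwards [hne, hmem] with x hx2 hx3
    exact hptwise x ⟨lt_of_le_of_ne hx3.1 (Ne.symm hx2), hx3.2⟩
  -- the value of the lower-bound integral, by FTC
  have hgval : (∫ x in t..b, (x / Real.sqrt (1 - x ^ 2) + (t - t ^ 2) / x))
      = ((t - t ^ 2) * Real.log b - Real.sqrt (1 - b ^ 2))
        - ((t - t ^ 2) * Real.log t - Real.sqrt (1 - t ^ 2)) := by
    refine intervalIntegral.integral_eq_sub_of_hasDerivAt
      (f := fun y : ℝ => (t - t ^ 2) * Real.log y - Real.sqrt (1 - y ^ 2)) ?_ hg_int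
    intro x hx
    rw [uIcc_of_le htb.le] at hx
    obtain ⟨hxt, hxb⟩ := hx
    have hx0 : 0 < x := h0.trans_le hxt
    have hx1 : x < 1 := by linarith
    have h1x : 0 < 1 - x ^ 2 := by nlinarith
    have hs0 : 0 < Real.sqrt (1 - x ^ 2) := Real.sqrt_pos.2 h1x
    have hsq : Real.sqrt (1 - x ^ 2) ^ 2 = 1 - x ^ 2 := Real.sq_sqrt h1x.le
    have hlog : HasDerivAt (fun y : ℝ => (t - t ^ 2) * Real.log y) ((t - t ^ 2) * x⁻¹) x :=
      (Real.hasDerivAt_log hx0.ne').const_mul _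
    have hinner : HasDerivAt (fun y : ℝ => 1 - y ^ 2) (-(2 * x ^ 1)) x := by
      simpa using ((hasDerivAt_pow 2 x).const_sub 1)
    have hsqrt : HasDerivAt (fun y : ℝ => Real.sqrt (1 - y ^ 2))
        (1 / (2 * Real.sqrt (1 - x ^ 2)) * (-(2 * x ^ 1))) x :=
      (Real.hasDerivAt_sqrt h1x.ne').comp x hinner
    have := hlog.sub hsqrt
    convert this using 1
    · rfl
    have h2s : (2 : ℝ) * Real.sqrt (1 - x ^ 2) ≠ 0 := by positivity
    field_simp
    ring
  -- the numerical estimate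
  have hnum : 1 / 2 < ((t - t ^ 2) * Real.log b - Real.sqrt (1 - b ^ 2))
        - ((t - t ^ 2) * Real.log t - Real.sqrt (1 - t ^ 2)) := by
    have hsb : Real.sqrt (1 - b ^ 2) = 1 / 2 := by
      rw [show 1 - b ^ 2 = (1/2 : ℝ)^2 by rw [hb2]; norm_num]
      rw [Real.sqrt_sq (by norm_num)]
    have hst : 1 - t ^ 2 ≤ Real.sqrt (1 - t ^ 2) := by
      rw [Real.le_sqrt (by nlinarith) (by nlinarith)]
      nlinarith
    have hL : 1 < Real.log b - Real.log t := by
      rw [← Real.log_div (by linarith) h0.ne']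
      rw [Real.lt_log_iff_exp_lt (by positivity)]
      rw [lt_div_iff₀ h0]
      nlinarith [Real.exp_one_lt_d9, Real.exp_pos 1]
    have hkey : t ^ 2 < (t - t ^ 2) * (Real.log b - Real.log t) := by
      nlinarith [mul_lt_mul_of_pos_left hL ha]
    linarith
  calc (1:ℝ)/2 < _ := hnum
    _ = ∫ x in t..b, (x / Real.sqrt (1 - x ^ 2) + (t - t ^ 2) / x) := hgval.symm
    _ ≤ ∫ x in t..b, 1 / Real.sqrt ((x / (x ^ 2 + t - t ^ 2)) ^ 2 - 1) := hcomp
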